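/- Let A → B → E → 0 be an exact sequence of abelian groups and let ℓ be a prime number. If the quotient A/ℓA is finite, then the induced sequence A^(ℓ) → B^(ℓ) → E^(ℓ) → 0 of ℓ-adic completions is exact, i.e. the second map is surjective and the image of the first map equals the kernel of the second. (Lemma 'exactcomp' b), second case.) -/

import Mathlib

/-- The subgroup `nA = {n·a : a ∈ A}` of an abelian group `A`. -/
def nSub (A : Type*) [AddCommGroup A] (n : ℕ) : AddSubgroup A where
  carrier := Set.range fun a : A => n • a
  zero_mem' := ⟨0, smul_zero n⟩
  add_mem' := by rintro x y ⟨a, rfl⟩ ⟨b, rfl⟩; exact ⟨a + b, smul_add n a b⟩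
  neg_mem' := by rintro x ⟨a, rfl⟩; exact ⟨-a, smul_neg n a⟩

theorem nSub_le {A : Type*} [AddCommGroup A] {n m : ℕ} (h : n ∣ m) :
    nSub A m ≤ nSub A n := by
  rintro x ⟨a, rfl⟩
  obtain ⟨c, rfl⟩ := h
  exact ⟨c • a, (mul_smul n c a).symm⟩

/-- The natural projection `A/mA → A/nA` when `n ∣ m`. -/
def projMap {A : Type*} [AddCommGroup A] {n m : ℕ} (h : n ∣ m) :
    A ⧸ nSub A m →+ A ⧸ nSub A n :=
  QuotientAddGroup.map _ _ (AddMonoidHom.id A) fun _x hx => nSub_le h hx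

/-- The ℓ-adic completion `A^(ℓ) = lim_m A/ℓ^m A`, as the subgroup of compatible
families in `Π m, A/ℓ^m A` (along the natural projection maps). -/
def AdicComp (ℓ : ℕ) (A : Type*) [AddCommGroup A] :
    AddSubgroup (∀ m : ℕ, A ⧸ nSub A (ℓ ^ m)) where
  carrier := {f | ∀ m : ℕ, projMap (pow_dvd_pow ℓ (Nat.le_succ m)) (f (m + 1)) = f m}
  zero_mem' := fun _m => map_zero _
  add_mem' := by
    intro f g hf hg m
    simp only [Pi.add_apply, map_add, hf m, hg m]
  neg_mem' := by
    intro f hf m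
    simp only [Pi.neg_apply, map_neg, hf m]

/-- The map `A/nA → B/nB` induced by a homomorphism `φ : A → B`. -/
def qMap {A B : Type*} [AddCommGroup A] [AddCommGroup B] (φ : A →+ B) (n : ℕ) :
    A ⧸ nSub A n →+ B ⧸ nSub B n :=
  QuotientAddGroup.map _ _ φ (by rintro x ⟨a, rfl⟩; exact ⟨φ a, by simp⟩)

theorem projMap_qMap {A B : Type*} [AddCommGroup A] [AddCommGroup B] (φ : A →+ B)
    {n m : ℕ} (h : n ∣ m) (x : A ⧸ nSub A m) :
    projMap h (qMap φ m x) = qMap φ n (projMap h x) :=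
  QuotientAddGroup.induction_on x fun _a => rfl

/-- The homomorphism `A^(ℓ) → B^(ℓ)` between ℓ-adic completions induced by a
homomorphism `φ : A → B`. -/
def adicMap {A B : Type*} [AddCommGroup A] [AddCommGroup B] (ℓ : ℕ) (φ : A →+ B) :
    ↥(AdicComp ℓ A) →+ ↥(AdicComp ℓ B) where
  toFun f := ⟨fun m => qMap φ (ℓ ^ m) (f.1 m), fun m => by
    show projMap (pow_dvd_pow ℓ (Nat.le_succ m)) (qMap φ (ℓ ^ (m + 1)) (f.1 (m + 1)))
      = qMap φ (ℓ ^ m) (f.1 m)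
    rw [projMap_qMap, f.2 m]⟩
  map_zero' := by
    apply Subtype.ext; funext m; exact map_zero _
  map_add' f g := by
    apply Subtype.ext; funext m; exact map_add _ _ _


open CategoryTheory in
/-- König-type lemma: an inverse limit of nonempty finite types indexed by `ℕ` is nonempty. -/
theorem seqLimit {T : ℕ → Type*} [∀ m, Finite (T m)] [∀ m, Nonempty (T m)]
    (d : ∀ m, T (m + 1) → T m) :
    ∃ x : ∀ m, T m, ∀ m, d m (x (m + 1)) = x m := by
  let F : ℕᵒᵖ ⥤ Type _ := Functor.ofOpSequence (fun n => (TypeCat.ofHom (d n) : T (n + 1) ⟶ T n))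
  have h1 : ∀ j : ℕᵒᵖ, Finite (F.obj j) := fun j => inferInstanceAs (Finite (T j.unop))
  have h2 : ∀ j : ℕᵒᵖ, Nonempty (F.obj j) := fun j => inferInstanceAs (Nonempty (T j.unop))
  obtain ⟨u, hu⟩ := nonempty_sections_of_finite_inverse_system F
  refine ⟨fun m => u (Opposite.op m), fun m => ?_⟩
  have := hu ((homOfLE (Nat.le_add_right m 1)).op)
  rw [Functor.ofOpSequence_map_homOfLE_succ] at this
  exact this

theorem qMap_mk {A B : Type*} [AddCommGroup A] [AddCommGroup B] (φ : A →+ B) (n : ℕ) (a : A) :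
    qMap φ n (QuotientAddGroup.mk a) = QuotientAddGroup.mk (φ a) := rfl

theorem qMap_surjective {B E : Type*} [AddCommGroup B] [AddCommGroup E] (g : B →+ E)
    (hg : Function.Surjective ⇑g) (n : ℕ) : Function.Surjective ⇑(qMap g n) := fun x =>
  QuotientAddGroup.induction_on x fun e => by
    obtain ⟨b, rfl⟩ := hg e; exact ⟨QuotientAddGroup.mk b, rfl⟩

theorem qMap_comp_eq_zero {A B E : Type*} [AddCommGroup A] [AddCommGroup B] [AddCommGroup E]
    (f : A →+ B) (g : B →+ E) (hfg : Function.Exact ⇑f ⇑g) (n : ℕ) (x : A ⧸ nSub A n) :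
    qMap g n (qMap f n x) = 0 := by
  induction x using QuotientAddGroup.induction_on with
  | H a =>
    rw [qMap_mk, qMap_mk, hfg.apply_apply_eq_zero a]
    rfl

theorem qMap_exact {A B E : Type*} [AddCommGroup A] [AddCommGroup B] [AddCommGroup E]
    (f : A →+ B) (g : B →+ E) (hfg : Function.Exact ⇑f ⇑g) (hg : Function.Surjective ⇑g)
    (n : ℕ) (y : B ⧸ nSub B n) : qMap g n y = 0 ↔ y ∈ Set.range ⇑(qMap f n) := by
  induction y using QuotientAddGroup.induction_on with
  | H b =>
    constructor
    · intro h
      rw [qMap_mk, QuotientAddGroup.eq_zero_iff] at h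
      obtain ⟨e, he⟩ := h
      obtain ⟨b', rfl⟩ := hg e
      have he' : n • g b' = g b := he
      have h0 : g (b - n • b') = 0 := by
        rw [map_sub, map_nsmul, he', sub_self]
      obtain ⟨a, ha⟩ := (hfg _).mp h0
      refine ⟨QuotientAddGroup.mk a, ?_⟩
      rw [qMap_mk, QuotientAddGroup.eq_iff_sub_mem, ha]
      refine ⟨-b', ?_⟩
      show n • -b' = b - n • b' - b
      rw [smul_neg]; abel
    · rintro ⟨x, hx⟩
      rw [← hx]
      exact qMap_comp_eq_zero f g hfg n x

theorem finite_quot_pow {A : Type*} [AddCommGroup A] (ℓ : ℕ)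
    (hquot : Finite (A ⧸ nSub A ℓ)) (m : ℕ) : Finite (A ⧸ nSub A (ℓ ^ m)) := by
  induction m with
  | zero =>
    have : Subsingleton (A ⧸ nSub A (ℓ ^ 0)) := by
      constructor
      intro x y
      induction x using QuotientAddGroup.induction_on with
      | H a =>
        induction y using QuotientAddGroup.induction_on with
        | H b =>
          rw [QuotientAddGroup.eq_iff_sub_mem]
          exact ⟨a - b, by simp⟩
    exact Finite.of_subsingleton
  | succ m ih =>
    set π : A ⧸ nSub A (ℓ ^ (m + 1)) →+ A ⧸ nSub A (ℓ ^ m) :=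
      projMap (pow_dvd_pow ℓ (Nat.le_succ m)) with hπdef
    have hπ : Function.Surjective ⇑π := fun x =>
      QuotientAddGroup.induction_on x fun a => ⟨QuotientAddGroup.mk a, rfl⟩
    have hker : Finite π.ker := by
      let mk1 : A →+ A ⧸ nSub A (ℓ ^ (m + 1)) := QuotientAddGroup.mk' _
      let ψ : A →+ A ⧸ nSub A (ℓ ^ (m + 1)) :=
        AddMonoidHom.mk' (fun a => mk1 (ℓ ^ m • a)) (fun a b => by
          show mk1 (ℓ ^ m • (a + b)) = mk1 (ℓ ^ m • a) + mk1 (ℓ ^ m • b)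
          rw [smul_add, map_add])
      have hψ0 : nSub A ℓ ≤ ψ.ker := by
        rintro _ ⟨a, rfl⟩
        show mk1 (ℓ ^ m • ℓ • a) = 0
        rw [← mul_smul, ← pow_succ]
        exact (QuotientAddGroup.eq_zero_iff _).mpr ⟨a, rfl⟩
      let ψ' := QuotientAddGroup.lift _ ψ hψ0
      have hsub : (π.ker : Set _) ⊆ Set.range ψ' := by
        intro x hx
        obtain ⟨b, rfl⟩ := QuotientAddGroup.mk_surjective x
        have hb : b ∈ nSub A (ℓ ^ m) := (QuotientAddGroup.eq_zero_iff _).mp hx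
        obtain ⟨a, rfl⟩ := hb
        exact ⟨QuotientAddGroup.mk a, rfl⟩
      exact Set.Finite.to_subtype (Set.Finite.subset (Set.finite_range ψ') hsub)
    have h1 : Finite ((A ⧸ nSub A (ℓ ^ (m + 1))) ⧸ π.ker) :=
      Finite.of_equiv _ (QuotientAddGroup.quotientKerEquivOfSurjective π hπ).symm.toEquiv
    exact Finite.of_equiv _ (AddSubgroup.addGroupEquivQuotientProdAddSubgroup (s := π.ker)).symm

/-- If `A → B → E → 0` is an exact sequence of abelian groups, `ℓ` is a prime and the
quotient `A/ℓA` is finite, then the induced sequence `A^(ℓ) → B^(ℓ) → E^(ℓ) → 0` of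
ℓ-adic completions is exact: the second map is surjective and the image of the first
map equals the kernel of the second. -/
theorem statement_2 {A B E : Type*} [AddCommGroup A] [AddCommGroup B] [AddCommGroup E]
    (ℓ : ℕ) (hℓ : ℓ.Prime) (f : A →+ B) (g : B →+ E)
    (hfg : Function.Exact ⇑f ⇑g) (hg : Function.Surjective ⇑g)
    (hquot : Finite (A ⧸ nSub A ℓ)) :
    Function.Surjective ⇑(adicMap ℓ g) ∧
      Function.Exact ⇑(adicMap ℓ f) ⇑(adicMap ℓ g) := by
  have hfin : ∀ m : ℕ, Finite (A ⧸ nSub A (ℓ ^ m)) := finite_quot_pow ℓ hquot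
  have hkerfin : ∀ m : ℕ, Finite {y : B ⧸ nSub B (ℓ ^ m) // qMap g (ℓ ^ m) y = 0} := by
    intro m
    have hs : {y : B ⧸ nSub B (ℓ ^ m) | qMap g (ℓ ^ m) y = 0} = Set.range ⇑(qMap f (ℓ ^ m)) := by
      ext y; exact qMap_exact f g hfg hg _ y
    have hf : {y : B ⧸ nSub B (ℓ ^ m) | qMap g (ℓ ^ m) y = 0}.Finite := by
      rw [hs]; exact Set.finite_range _
    exact hf.to_subtype
  constructor
  · rintro ⟨e, he⟩
    let T : ℕ → Type _ := fun m => {b : B ⧸ nSub B (ℓ ^ m) // qMap g (ℓ ^ m) b = e m}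
    have hTn : ∀ m, Nonempty (T m) := fun m => by
      obtain ⟨b, hb⟩ := qMap_surjective g hg (ℓ ^ m) (e m); exact ⟨⟨b, hb⟩⟩
    have hTf : ∀ m, Finite (T m) := by
      intro m
      obtain ⟨⟨b₀, hb₀⟩⟩ := hTn m
      have hinj : Function.Injective (fun x : T m => (⟨x.1 - b₀, by
          rw [map_sub, x.2, hb₀, sub_self]⟩ :
          {y : B ⧸ nSub B (ℓ ^ m) // qMap g (ℓ ^ m) y = 0})) := by
        intro x y hxy
        apply Subtype.ext
        have := congrArg Subtype.val hxy
        simpa using this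
      exact Finite.of_injective _ hinj
    obtain ⟨x, hx⟩ := seqLimit (T := T) (fun m p =>
      ⟨projMap (pow_dvd_pow ℓ (Nat.le_succ m)) p.1, by
        rw [← projMap_qMap, p.2, he m]⟩)
    refine ⟨⟨fun m => (x m).1, fun m => congrArg Subtype.val (hx m)⟩, ?_⟩
    exact Subtype.ext (funext fun m => (x m).2)
  · intro y
    constructor
    · intro hy0
      have hy : ∀ m, qMap g (ℓ ^ m) (y.1 m) = 0 := fun m =>
        congrFun (congrArg Subtype.val hy0) m
      let T : ℕ → Type _ := fun m => {a : A ⧸ nSub A (ℓ ^ m) // qMap f (ℓ ^ m) a = y.1 m}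
      have hTn : ∀ m, Nonempty (T m) := fun m => by
        obtain ⟨a, ha⟩ := (qMap_exact f g hfg hg _ (y.1 m)).mp (hy m); exact ⟨⟨a, ha⟩⟩
      have hTf : ∀ m, Finite (T m) := fun m => Subtype.finite
      obtain ⟨x, hx⟩ := seqLimit (T := T) (fun m p =>
        ⟨projMap (pow_dvd_pow ℓ (Nat.le_succ m)) p.1, by
          rw [← projMap_qMap, p.2, y.2 m]⟩)
      exact ⟨⟨fun m => (x m).1, fun m => congrArg Subtype.val (hx m)⟩,
        Subtype.ext (funext fun m => (x m).2)⟩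
    · rintro ⟨a, rfl⟩
      apply Subtype.ext; funext m
      exact qMap_comp_eq_zero f g hfg _ (a.1 m)
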